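/- arXiv:1405.1795 — 3 statements merged into one kernel-verified Lean document; each statement's English description precedes it below -/
import Mathlib

section
/- Let r > 1 and b \ge 1 be integers and q a prime power. Then the number of monic irreducible polynomials g \in K[t] of degree r such that g^{\tau} \ne g for every nontrivial \tau \in Gal(K/F) equals b \cdot |Irr_{br}(q)|, where Irr_{br}(q) is the set of monic irreducible polynomials of degree br in F[t]. -/
open Polynomial Module

/-- Over a finite ring, the set of polynomials of a fixed `natDegree` is finite. -/
lemma finite_natDegree_eq (R : Type*) [Semiring R] [Finite R] (n : ℕ) :
    {p : R[X] | p.natDegree = n}.Finite := by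
  apply Set.Finite.of_finite_image
    (f := fun p : R[X] => fun i : Fin (n + 1) => p.coeff i) (Set.toFinite _)
  intro p hp q hq h
  ext k
  by_cases hk : k ≤ n
  · exact congrFun h ⟨k, Nat.lt_succ_of_le hk⟩
  · push_neg at hk
    rw [p.coeff_eq_zero_of_natDegree_lt (hp.trans_lt hk),
      q.coeff_eq_zero_of_natDegree_lt (hq.trans_lt hk)]

theorem stmt12 (q b r : ℕ) (hq : IsPrimePow q) (hb : 1 ≤ b) (hr : 1 < r)
    (F K : Type*) [Field F] [Fintype F] (hF : Fintype.card F = q)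
    [Field K] [Algebra F K] [FiniteDimensional F K] (hK : Module.finrank F K = b) :
    Nat.card {g : Polynomial K | g.Monic ∧ Irreducible g ∧ g.natDegree = r ∧
        ∀ τ : K ≃ₐ[F] K, τ ≠ 1 → g.map (τ : K →+* K) ≠ g} =
      b * Nat.card {f : Polynomial F | f.Monic ∧ Irreducible f ∧ f.natDegree = b * r} := by
  classical
  have hq2 : 2 ≤ q := hq.two_le
  have hb0 : 0 < b := hb
  have hr0 : 0 < r := lt_trans one_pos hr
  set Ω := AlgebraicClosure K with hΩ
  haveI : Finite K := Module.finite_of_finite F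
  haveI : Fintype K := Fintype.ofFinite K
  have hcardK : Fintype.card K = q ^ b := by
    rw [card_eq_pow_finrank (K := F) (V := K), hF, hK]
  haveI : Algebra.IsIntegral K Ω := inferInstance
  haveI : Algebra.IsIntegral F K := inferInstance
  haveI : Algebra.IsIntegral F Ω := Algebra.IsIntegral.trans K
  have hintF : ∀ α : Ω, IsIntegral F α := fun α => Algebra.IsIntegral.isIntegral α
  have hintK : ∀ α : Ω, IsIntegral K α := fun α => Algebra.IsIntegral.isIntegral α
  have hGcard : Fintype.card (K ≃ₐ[F] K) = b := by
    rw [← Nat.card_eq_fintype_card, IsGalois.card_aut_eq_finrank, hK]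
  -- basic facts about mapping polynomials along automorphisms
  have hcoe1 : ((1 : K ≃ₐ[F] K) : K →+* K) = RingHom.id K := rfl
  have hmap1 : ∀ p : K[X], p.map ((1 : K ≃ₐ[F] K) : K →+* K) = p := by
    intro p; rw [hcoe1, Polynomial.map_id]
  have hmapmul : ∀ (p : K[X]) (σ σ' : K ≃ₐ[F] K),
      (p.map (σ : K →+* K)).map (σ' : K →+* K) = p.map ((σ' * σ : K ≃ₐ[F] K) : K →+* K) := by
    intro p σ σ'
    rw [Polynomial.map_map]
    rfl
  -- the "norm" of the minimal polynomial over K lifts to F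
  have hNlift : ∀ α : Ω, ∃ N' : F[X], N'.Monic ∧
      N'.map (algebraMap F K) = ∏ σ : K ≃ₐ[F] K, (minpoly K α).map (σ : K →+* K) ∧
      minpoly F α ∣ N' ∧ N'.natDegree = b * (minpoly K α).natDegree := by
    intro α
    set g : K[X] := minpoly K α with hg
    set N : K[X] := ∏ σ : K ≃ₐ[F] K, g.map (σ : K →+* K) with hN
    have hgmonic : g.Monic := minpoly.monic (hintK α)
    have hNmonic : N.Monic := monic_prod_of_monic _ _ fun σ _ => hgmonic.map _
    have hNfix : ∀ σ0 : K ≃ₐ[F] K, N.map (σ0 : K →+* K) = N := by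
      intro σ0
      rw [hN, ← Polynomial.coe_mapRingHom, map_prod]
      refine Fintype.prod_bijective (fun σ => σ0 * σ) (Group.mulLeft_bijective σ0) _ _
        fun σ => ?_
      simp only [Polynomial.coe_mapRingHom]
      exact hmapmul g σ σ0
    have hNlifts : N ∈ Polynomial.lifts (algebraMap F K) := by
      rw [Polynomial.lifts_iff_coeff_lifts]
      intro n
      have hfix : ∀ σ : K ≃ₐ[F] K, σ (N.coeff n) = N.coeff n := by
        intro σ
        conv_rhs => rw [← hNfix σ]
        rw [Polynomial.coeff_map]
        rfl
      have hbot : IntermediateField.fixedField (⊤ : Subgroup (K ≃ₐ[F] K)) = ⊥ :=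
        ((IsGalois.tfae).out 0 1).mp (inferInstance : IsGalois F K)
      have hmem : N.coeff n ∈ IntermediateField.fixedField (⊤ : Subgroup (K ≃ₐ[F] K)) :=
        fun σ => hfix σ.1
      rw [hbot, IntermediateField.mem_bot] at hmem
      exact hmem
    obtain ⟨N', hN'map, hN'deg, hN'monic⟩ :=
      Polynomial.lifts_and_degree_eq_and_monic hNlifts hNmonic
    have hNdeg : N.natDegree = b * g.natDegree := by
      rw [hN, Polynomial.natDegree_prod _ _ (fun σ _ => (hgmonic.map _).ne_zero)]
      rw [Finset.sum_congr rfl (fun σ _ => Polynomial.natDegree_map _),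
        Finset.sum_const, smul_eq_mul, Finset.card_univ, hGcard]
    refine ⟨N', hN'monic, hN'map, ?_, ?_⟩
    · apply minpoly.dvd F α
      have h0 : (Polynomial.aeval α) N = 0 := by
        rw [hN, map_prod]
        apply Finset.prod_eq_zero (Finset.mem_univ (1 : K ≃ₐ[F] K))
        rw [hmap1 g]
        exact minpoly.aeval K α
      rw [← Polynomial.aeval_map_algebraMap K α N', hN'map]
      exact h0
    · have h1 := congrArg Polynomial.natDegree hN'map
      rw [Polynomial.natDegree_map, hNdeg] at h1
      exact h1
  have hminLB : ∀ α : Ω, (minpoly F α).natDegree ≤ b * (minpoly K α).natDegree := by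
    intro α
    obtain ⟨N', hmo, -, hdvd, hdeg⟩ := hNlift α
    exact hdeg ▸ Polynomial.natDegree_le_of_dvd hdvd hmo.ne_zero
  -- upper bound for the degree over K when the degree over F is b*r
  have keyUB : ∀ α : Ω, (minpoly F α).natDegree = b * r → (minpoly K α).natDegree ≤ r := by
    intro α hα
    set E : IntermediateField F Ω := IntermediateField.adjoin F {α} with hE
    haveI : FiniteDimensional F E := IntermediateField.adjoin.finiteDimensional (hintF α)
    have hfr : finrank F E = b * r := by
      rw [hE, IntermediateField.adjoin.finrank (hintF α), hα]
    haveI : Finite E := Module.finite_of_finite F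
    haveI : Fintype E := Fintype.ofFinite E
    have hcardE : Fintype.card E = q ^ (b * r) := by
      rw [card_eq_pow_finrank (K := F) (V := E), hF, hfr]
    have hbr0 : b * r ≠ 0 := by positivity
    set P : Polynomial Ω := X ^ q ^ (b * r) - X with hP
    have hPne : P ≠ 0 := FiniteField.X_pow_card_pow_sub_X_ne_zero _ hbr0 hq2
    have hPdeg : P.natDegree = q ^ (b * r) :=
      FiniteField.X_pow_card_pow_sub_X_natDegree_eq _ hbr0 hq2
    have hEsub : (E : Set Ω) ⊆ {x : Ω | P.IsRoot x} := by
      intro x hx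
      have h1 : (⟨x, hx⟩ : E) ^ q ^ (b * r) = ⟨x, hx⟩ := by
        rw [← hcardE]; exact FiniteField.pow_card _
      have h2 : x ^ q ^ (b * r) = x := by simpa using congrArg Subtype.val h1
      simp [Set.mem_setOf_eq, hP, Polynomial.IsRoot, h2]
    have hfin : {x : Ω | P.IsRoot x}.Finite := Polynomial.finite_setOf_isRoot hPne
    have hcard_root : {x : Ω | P.IsRoot x}.ncard ≤ q ^ (b * r) := by
      have h3 : {x : Ω | P.IsRoot x} = ↑P.roots.toFinset := by
        ext x; simp [Polynomial.mem_roots, hPne, Polynomial.IsRoot]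
      rw [h3, Set.ncard_coe_finset]
      calc P.roots.toFinset.card ≤ Multiset.card P.roots := P.roots.toFinset_card_le
        _ ≤ P.natDegree := P.card_roots'
        _ = q ^ (b * r) := hPdeg
    have hEcard : (E : Set Ω).ncard = q ^ (b * r) := by
      rw [← Nat.card_coe_set_eq, SetLike.coe_sort_coe, Nat.card_eq_fintype_card, hcardE]
    have hES : (E : Set Ω) = {x : Ω | P.IsRoot x} :=
      Set.eq_of_subset_of_ncard_le hEsub (hcard_root.trans hEcard.ge) hfin
    have hKE : ∀ c : K, algebraMap K Ω c ∈ E := by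
      intro c
      have h2 : (algebraMap K Ω c) ^ q ^ (b * r) = algebraMap K Ω c := by
        rw [← map_pow]
        congr 1
        rw [pow_mul, ← hcardK]
        exact FiniteField.pow_card_pow r c
      have hmem : algebraMap K Ω c ∈ {x : Ω | P.IsRoot x} := by
        simp [hP, Polynomial.IsRoot, h2]
      rwa [← hES] at hmem
    letI : Algebra K E := RingHom.toAlgebra
      { toFun := fun c => ⟨algebraMap K Ω c, hKE c⟩
        map_one' := by ext; simp
        map_mul' := fun x y => by ext; simp
        map_zero' := by ext; simp
        map_add' := fun x y => by ext; simp }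
    haveI : IsScalarTower K E Ω := IsScalarTower.of_algebraMap_eq fun x => rfl
    haveI : IsScalarTower F K E := IsScalarTower.of_algebraMap_eq fun x => by
      apply Subtype.ext
      exact IsScalarTower.algebraMap_apply F K Ω x
    have hrankKE : finrank K E = r := by
      have h4 := finrank_mul_finrank F K (↥E)
      rw [hK, hfr] at h4
      exact Nat.eq_of_mul_eq_mul_left hb0 h4
    have hαE : α ∈ E := IntermediateField.mem_adjoin_simple_self F α
    let ψ : E →ₐ[K] Ω :=
      { toRingHom := E.val.toRingHom
        commutes' := fun c => rfl }
    have h5 : minpoly K α = minpoly K (⟨α, hαE⟩ : E) := by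
      have h6 := minpoly.algHom_eq ψ (fun x y hxy => Subtype.ext hxy) (⟨α, hαE⟩ : E)
      have h7 : ψ ⟨α, hαE⟩ = α := rfl
      rw [h7] at h6
      exact h6
    rw [h5, ← hrankKE]
    exact minpoly.natDegree_le _
  -- Part A: every element of degree b*r over F yields a "free-orbit" irreducible over K
  have haveA : ∀ α : Ω, (minpoly F α).natDegree = b * r →
      (minpoly K α).Monic ∧ Irreducible (minpoly K α) ∧ (minpoly K α).natDegree = r ∧
        ∀ τ : K ≃ₐ[F] K, τ ≠ 1 → (minpoly K α).map (τ : K →+* K) ≠ minpoly K α := by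
    intro α hα
    have hdegK : (minpoly K α).natDegree = r := by
      refine le_antisymm (keyUB α hα) ?_
      have h1 := hminLB α
      rw [hα] at h1
      exact le_of_mul_le_mul_left h1 hb0
    refine ⟨minpoly.monic (hintK α), minpoly.irreducible (hintK α), hdegK, ?_⟩
    intro τ hτ hfix
    obtain ⟨N', hN'monic, hN'map, hdvd, hdeg⟩ := hNlift α
    have hNeq : minpoly F α = N' := by
      obtain ⟨c, hc⟩ := hdvd
      have hc0 : c ≠ 0 := by
        rintro rfl; rw [mul_zero] at hc; exact hN'monic.ne_zero hc
      have hmc0 : minpoly F α ≠ 0 := (minpoly.monic (hintF α)).ne_zero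
      have hdc : c.natDegree = 0 := by
        have h2 := congrArg Polynomial.natDegree hc
        rw [Polynomial.natDegree_mul hmc0 hc0, hdeg, hdegK, hα] at h2
        omega
      obtain ⟨a, rfl⟩ := Polynomial.natDegree_eq_zero.mp hdc
      have hlc := hN'monic
      rw [hc] at hlc
      have ha1 : a = 1 := by
        have h8 := hlc.leadingCoeff
        rwa [Polynomial.leadingCoeff_mul, (minpoly.monic (hintF α)).leadingCoeff, one_mul,
          Polynomial.leadingCoeff_C] at h8
      rw [hc, ha1, map_one, mul_one]
    have hM : (minpoly F α).map (algebraMap F K) =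
        ∏ σ : K ≃ₐ[F] K, (minpoly K α).map (σ : K →+* K) := by
      rw [hNeq, hN'map]
    have hsq : Squarefree ((minpoly F α).map (algebraMap F K)) := by
      have hsep : (minpoly F α).Separable :=
        PerfectField.separable_of_irreducible (minpoly.irreducible (hintF α))
      exact hsep.map.squarefree
    have hdvd2 : minpoly K α * minpoly K α ∣ (minpoly F α).map (algebraMap F K) := by
      rw [hM]
      have h1m : (1 : K ≃ₐ[F] K) ∈ (Finset.univ : Finset (K ≃ₐ[F] K)) := Finset.mem_univ _
      rw [← Finset.mul_prod_erase _ _ h1m]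
      have hτm : τ ∈ Finset.univ.erase (1 : K ≃ₐ[F] K) :=
        Finset.mem_erase.mpr ⟨hτ, Finset.mem_univ _⟩
      rw [← Finset.mul_prod_erase _ _ hτm, hmap1, hfix, ← mul_assoc]
      exact Dvd.intro _ rfl
    exact (minpoly.irreducible (hintK α)).not_isUnit (hsq _ hdvd2)
  -- Part B: roots of free-orbit irreducibles over K have degree b*r over F
  have haveB : ∀ g : K[X], g.Monic → Irreducible g → g.natDegree = r →
      (∀ τ : K ≃ₐ[F] K, τ ≠ 1 → g.map (τ : K →+* K) ≠ g) →
      ∀ α : Ω, (Polynomial.aeval α) g = 0 →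
      minpoly K α = g ∧ (minpoly F α).natDegree = b * r := by
    intro g hmon hirr hdeg horb α hroot
    have hmin : minpoly K α = g := (minpoly.eq_of_irreducible_of_monic hirr hroot hmon).symm
    refine ⟨hmin, le_antisymm ?_ ?_⟩
    · have h1 := hminLB α
      rwa [hmin, hdeg] at h1
    · set M : K[X] := (minpoly F α).map (algebraMap F K) with hMdef
      have hM0 : M ≠ 0 := ((minpoly.monic (hintF α)).map _).ne_zero
      have hMfix : ∀ σ : K ≃ₐ[F] K, M.map (σ : K →+* K) = M := by
        intro σ
        rw [hMdef, Polynomial.map_map]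
        congr 1
        ext x
        simp
      have hdvdM : ∀ σ : K ≃ₐ[F] K, g.map (σ : K →+* K) ∣ M := by
        intro σ
        have h1 : g ∣ M := by
          rw [← hmin]
          apply minpoly.dvd K α
          rw [hMdef, Polynomial.aeval_map_algebraMap]
          exact minpoly.aeval F α
        have h2 := Polynomial.map_dvd (σ : K →+* K) h1
        rwa [hMfix σ] at h2
      have hirrσ : ∀ σ : K ≃ₐ[F] K, Irreducible (g.map (σ : K →+* K)) := by
        intro σ
        have h3 : g.map (σ : K →+* K) = Polynomial.mapEquiv (σ : K ≃+* K) g := rfl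
        rw [h3]
        exact (MulEquiv.irreducible_iff (Polynomial.mapEquiv (σ : K ≃+* K))).mpr hirr
      have hdist : ∀ σ σ' : K ≃ₐ[F] K, σ ≠ σ' →
          g.map (σ : K →+* K) ≠ g.map (σ' : K →+* K) := by
        intro σ σ' hne heq
        have h3 := congrArg (Polynomial.map ((σ'⁻¹ : K ≃ₐ[F] K) : K →+* K)) heq
        rw [hmapmul, hmapmul, inv_mul_cancel, hmap1] at h3
        refine horb (σ'⁻¹ * σ) ?_ h3
        intro h4
        exact hne (inv_mul_eq_one.mp h4).symm
      have hcop : ∀ σ σ' : K ≃ₐ[F] K, σ ≠ σ' →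
          IsCoprime (g.map (σ : K →+* K)) (g.map (σ' : K →+* K)) := by
        intro σ σ' hne
        apply isCoprime_of_irreducible_dvd
        · rintro ⟨h0, -⟩
          exact (hirrσ σ).ne_zero h0
        · intro z hz hz1 hz2
          have h1 := hz.associated_of_dvd (hirrσ σ) hz1
          have h2 := hz.associated_of_dvd (hirrσ σ') hz2
          have h3 : Associated (g.map (σ : K →+* K)) (g.map (σ' : K →+* K)) :=
            h1.symm.trans h2
          exact hdist σ σ' hne (Polynomial.eq_of_monic_of_associated (hmon.map _) (hmon.map _) h3)
      have hprod : (∏ σ : K ≃ₐ[F] K, g.map (σ : K →+* K)) ∣ M := by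
        apply Finset.prod_dvd_of_coprime
        · intro σ hσ σ' hσ' hne
          exact hcop σ σ' hne
        · intro σ _
          exact hdvdM σ
      have h5 := Polynomial.natDegree_le_of_dvd hprod hM0
      rw [Polynomial.natDegree_prod _ _ (fun σ _ => ((hmon.map _)).ne_zero),
        Finset.sum_congr rfl (fun σ _ => Polynomial.natDegree_map _),
        Finset.sum_const, smul_eq_mul, Finset.card_univ, hGcard, hdeg] at h5
      rwa [hMdef, Polynomial.natDegree_map] at h5
  -- Finiteness
  have hAfin : {g : K[X] | g.Monic ∧ Irreducible g ∧ g.natDegree = r ∧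
      ∀ τ : K ≃ₐ[F] K, τ ≠ 1 → g.map (τ : K →+* K) ≠ g}.Finite :=
    (finite_natDegree_eq K r).subset fun g hg => hg.2.2.1
  have hBfin : {f : F[X] | f.Monic ∧ Irreducible f ∧ f.natDegree = b * r}.Finite :=
    (finite_natDegree_eq F (b * r)).subset fun f hf => hf.2.2
  have hSfin : {α : Ω | (minpoly F α).natDegree = b * r}.Finite := by
    apply Set.Finite.subset (Set.Finite.biUnion hBfin
      (fun f hf => Polynomial.finite_setOf_isRoot
        (p := f.map (algebraMap F Ω)) ((hf.1.map (algebraMap F Ω)).ne_zero)))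
    intro α hα
    refine Set.mem_biUnion (show minpoly F α ∈ {f : F[X] | f.Monic ∧ Irreducible f ∧
      f.natDegree = b * r} from ⟨minpoly.monic (hintF α), minpoly.irreducible (hintF α), hα⟩) ?_
    show ((minpoly F α).map (algebraMap F Ω)).IsRoot α
    rw [Polynomial.IsRoot, Polynomial.eval_map, ← Polynomial.aeval_def]
    exact minpoly.aeval F α
  set Sfin := hSfin.toFinset with hSfindef
  set Afin := hAfin.toFinset with hAfindef
  set Bfin := hBfin.toFinset with hBfindef
  -- fibration over A
  have hmapA : ∀ α ∈ Sfin, minpoly K α ∈ Afin := by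
    intro α hα
    rw [hSfindef, Set.Finite.mem_toFinset] at hα
    rw [hAfindef, Set.Finite.mem_toFinset]
    exact haveA α hα
  have hfiberA : ∀ g ∈ Afin, (Sfin.filter (fun α => minpoly K α = g)).card = r := by
    intro g hg
    rw [hAfindef, Set.Finite.mem_toFinset] at hg
    obtain ⟨hmon, hirr, hdeg, horb⟩ := hg
    have hg0 : g.map (algebraMap K Ω) ≠ 0 := (hmon.map _).ne_zero
    have heq : Sfin.filter (fun α => minpoly K α = g) =
        (g.map (algebraMap K Ω)).roots.toFinset := by
      ext α
      rw [Finset.mem_filter, hSfindef, Set.Finite.mem_toFinset, Multiset.mem_toFinset,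
        Polynomial.mem_roots hg0]
      constructor
      · rintro ⟨hαS, rfl⟩
        rw [Polynomial.IsRoot, Polynomial.eval_map, ← Polynomial.aeval_def]
        exact minpoly.aeval K α
      · intro hroot
        rw [Polynomial.IsRoot, Polynomial.eval_map, ← Polynomial.aeval_def] at hroot
        obtain ⟨h2, h3⟩ := haveB g hmon hirr hdeg horb α hroot
        exact ⟨h3, h2⟩
    rw [heq, Multiset.toFinset_card_of_nodup
      (Polynomial.nodup_roots ((PerfectField.separable_of_irreducible hirr).map)), ← hdeg]
    exact ((Polynomial.natDegree_map _).symm.trans (IsAlgClosed.splits (g.map (algebraMap K Ω))).natDegree_eq_card_roots).symm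
  -- fibration over B
  have hmapB : ∀ α ∈ Sfin, minpoly F α ∈ Bfin := by
    intro α hα
    rw [hSfindef, Set.Finite.mem_toFinset] at hα
    rw [hBfindef, Set.Finite.mem_toFinset]
    exact ⟨minpoly.monic (hintF α), minpoly.irreducible (hintF α), hα⟩
  have hfiberB : ∀ f ∈ Bfin, (Sfin.filter (fun α => minpoly F α = f)).card = b * r := by
    intro f hf
    rw [hBfindef, Set.Finite.mem_toFinset] at hf
    obtain ⟨hmon, hirr, hdeg⟩ := hf
    have hf0 : f.map (algebraMap F Ω) ≠ 0 := (hmon.map _).ne_zero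
    have heq : Sfin.filter (fun α => minpoly F α = f) =
        (f.map (algebraMap F Ω)).roots.toFinset := by
      ext α
      rw [Finset.mem_filter, hSfindef, Set.Finite.mem_toFinset, Multiset.mem_toFinset,
        Polynomial.mem_roots hf0]
      constructor
      · rintro ⟨hαS, rfl⟩
        rw [Polynomial.IsRoot, Polynomial.eval_map, ← Polynomial.aeval_def]
        exact minpoly.aeval F α
      · intro hroot
        rw [Polynomial.IsRoot, Polynomial.eval_map, ← Polynomial.aeval_def] at hroot
        have h2 : minpoly F α = f :=
          (minpoly.eq_of_irreducible_of_monic hirr hroot hmon).symm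
        refine ⟨?_, h2⟩
        show (minpoly F α).natDegree = b * r
        rw [h2]
        exact hdeg
    rw [heq, Multiset.toFinset_card_of_nodup
      (Polynomial.nodup_roots ((PerfectField.separable_of_irreducible hirr).map)), ← hdeg]
    exact ((Polynomial.natDegree_map _).symm.trans (IsAlgClosed.splits (f.map (algebraMap F Ω))).natDegree_eq_card_roots).symm
  have hcount1 : Sfin.card = Afin.card * r := by
    rw [Finset.card_eq_sum_card_fiberwise hmapA, Finset.sum_congr rfl hfiberA,
      Finset.sum_const, smul_eq_mul]
  have hcount2 : Sfin.card = Bfin.card * (b * r) := by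
    rw [Finset.card_eq_sum_card_fiberwise hmapB, Finset.sum_congr rfl hfiberB,
      Finset.sum_const, smul_eq_mul]
  have hfinal : Afin.card = b * Bfin.card := by
    have h1 : Afin.card * r = (b * Bfin.card) * r := by
      rw [← hcount1, hcount2]; ring
    exact Nat.eq_of_mul_eq_mul_right hr0 h1
  rw [Nat.card_coe_set_eq, Nat.card_coe_set_eq, Set.ncard_eq_toFinset_card _ hAfin,
    Set.ncard_eq_toFinset_card _ hBfin]
  exact hfinal
end

section
/- Let E be a field, V a finite-dimensional E-vector space, and let g, s, u be linear endomorphisms of V such that g is bijective, g = s \circ u, s \circ u = u \circ s, s is semisimple, and u is unipotent. Then the characteristic polynomial of g equals the characteristic polynomial of s. -/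
open Polynomial Matrix

private lemma det_one_sub_nilpotent {F : Type*} [Field F] {m : Type*} [Fintype m] [DecidableEq m]
    (P : Matrix m m F) (hP : IsNilpotent P) : (1 - P).det = 1 := by
  have hc : P.charpoly = X ^ Fintype.card m :=
    sub_eq_zero.mp (Matrix.isNilpotent_charpoly_sub_pow_of_isNilpotent hP).eq_zero
  have hmap : (Matrix.charmatrix P).map (evalRingHom (1 : F)) = 1 - P := by
    ext i j
    by_cases h : i = j
    · subst h; simp [Matrix.charmatrix_apply_eq, Matrix.one_apply]
    · simp [Matrix.charmatrix_apply_ne _ _ _ h, Matrix.one_apply_ne h]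
  have := congrArg (evalRingHom (1 : F)) hc
  rw [Matrix.charpoly, RingHom.map_det, RingHom.mapMatrix_apply, hmap] at this
  simpa using this

private lemma charpoly_add_nilpotent {E : Type*} [Field E] {m : Type*} [Fintype m] [DecidableEq m]
    (A B : Matrix m m E) (hAB : Commute A B) (hB : IsNilpotent B) :
    (A + B).charpoly = A.charpoly := by
  set F := FractionRing E[X] with hF
  let φ : E[X] →+* F := algebraMap E[X] F
  have hinj : Function.Injective φ := IsFractionRing.injective _ _
  apply hinj
  rw [Matrix.charpoly, Matrix.charpoly, RingHom.map_det, RingHom.map_det,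
    RingHom.mapMatrix_apply, RingHom.mapMatrix_apply]
  have hch : (A + B).charmatrix = A.charmatrix - B.map C := by
    unfold Matrix.charmatrix
    simp only [RingHom.mapMatrix_apply]
    rw [Matrix.map_add _ (map_add C)]
    abel
  rw [hch, Matrix.map_sub _ (map_sub φ)]
  set M : Matrix m m F := A.charmatrix.map φ with hM
  set N : Matrix m m F := (B.map C).map φ with hN
  -- N nilpotent
  have hNnil : IsNilpotent N := (hB.map (C : E →+* E[X]).mapMatrix).map φ.mapMatrix
  -- M and N commute
  have hMN : Commute M N := by
    have h1 : Commute (A.map (C : E →+* E[X])) (B.map C) := by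
      unfold Commute SemiconjBy
      rw [← Matrix.map_mul, ← Matrix.map_mul, hAB]
    have hsc : Commute (Matrix.scalar m (X : E[X])) (B.map C) := by
      exact Matrix.scalar_commute _ (fun r => Commute.all _ _) _
    have h2 : Commute A.charmatrix (B.map C) := by
      unfold Matrix.charmatrix
      rw [RingHom.mapMatrix_apply]
      exact hsc.sub_left h1
    have := h2.map φ.mapMatrix
    simpa [RingHom.mapMatrix_apply, hM, hN] using this
  -- M invertible
  have hdet : IsUnit M.det := by
    rw [hM, ← RingHom.mapMatrix_apply, ← RingHom.map_det]
    have : A.charmatrix.det ≠ 0 := by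
      rw [← Matrix.charpoly]
      exact A.charpoly_monic.ne_zero
    exact isUnit_iff_ne_zero.mpr (fun h => this (hinj (by simpa using h)))
  -- inverse commutes
  have hMinvN : Commute M⁻¹ N := by
    have : M⁻¹ * (N * M) * M⁻¹ = M⁻¹ * (M * N) * M⁻¹ := by rw [hMN]
    calc M⁻¹ * N = M⁻¹ * N * (M * M⁻¹) := by rw [Matrix.mul_nonsing_inv _ hdet, mul_one]
    _ = M⁻¹ * (N * M) * M⁻¹ := by noncomm_ring
    _ = M⁻¹ * (M * N) * M⁻¹ := this
    _ = (M⁻¹ * M) * (N * M⁻¹) := by noncomm_ring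
    _ = N * M⁻¹ := by rw [Matrix.nonsing_inv_mul _ hdet, one_mul]
  have hPnil : IsNilpotent (M⁻¹ * N) := hMinvN.isNilpotent_mul_left hNnil
  have key : M - N = M * (1 - M⁻¹ * N) := by
    rw [mul_sub, mul_one, ← mul_assoc, Matrix.mul_nonsing_inv _ hdet, one_mul]
  rw [key, Matrix.det_mul, det_one_sub_nilpotent _ hPnil, mul_one]

open Module

/-- An endomorphism is semisimple if every invariant subspace has an invariant complement. -/
def IsSemisimpleEndo {E V : Type*} [Field E] [AddCommGroup V] [Module E V]
    (s : V →ₗ[E] V) : Prop :=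
  ∀ p : Submodule E V, Submodule.map s p ≤ p →
    ∃ p' : Submodule E V, IsCompl p p' ∧ Submodule.map s p' ≤ p'

theorem stmt13 (E V : Type*) [Field E] [AddCommGroup V] [Module E V] [FiniteDimensional E V]
    (g s u : V →ₗ[E] V) (hg : Function.Bijective g) (hgsu : g = s ∘ₗ u)
    (hcomm : s ∘ₗ u = u ∘ₗ s) (hs : IsSemisimpleEndo s)
    (hu : IsNilpotent (u - LinearMap.id)) :
    LinearMap.charpoly g = LinearMap.charpoly s := by
  classical
  -- view everything in the endomorphism ring
  set N : V →ₗ[E] V := s * (u - 1) with hNdef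
  have hgN : g = s + N := by
    rw [hNdef, mul_sub, mul_one]
    rw [show s * u = g from hgsu.symm]
    abel
  have hcomm' : Commute s u := hcomm
  have hsu1 : Commute s (u - 1) := hcomm'.sub_right (Commute.one_right s)
  have hu1 : IsNilpotent (u - 1) := hu
  have hNnil : IsNilpotent N := hsu1.isNilpotent_mul_left hu1
  have hsN : Commute s N := (Commute.refl s).mul_right hsu1
  -- move to matrices
  let b := Module.finBasis E V
  rw [← LinearMap.charpoly_toMatrix g b, ← LinearMap.charpoly_toMatrix s b]
  set φ := LinearMap.toMatrixAlgEquiv b with hφ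
  have h1 : LinearMap.toMatrix b b g = φ s + φ N := by
    rw [hgN]; simp [hφ, LinearMap.toMatrixAlgEquiv, map_add]
  have h2 : LinearMap.toMatrix b b s = φ s := by
    simp [hφ, LinearMap.toMatrixAlgEquiv]
  rw [h1, h2]
  exact charpoly_add_nilpotent (φ s) (φ N) (hsN.map φ.toAlgHom.toRingHom) (hNnil.map φ)
end

section
/- Let c, b be positive integers, q a prime power, and r an integer with r > c/2. Let g \in K[t] be monic irreducible of degree r such that g^{\tau} \ne g for every nontrivial \tau \in Gal(K/F). Then there is a monic irreducible polynomial f \in F[t] of degree br whose image in K[t] equals \prod_{\tau \in Gal(K/F)} g^{\tau}; and for every X \in M(c,K), the endomorphism X_{bc,q} is f-primary cyclic if and only if there is exactly one \tau \in Gal(K/F) such that g^{\tau} divides charpoly_K(X). -/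
open Matrix Polynomial Module

/-- An irreducible factor of the characteristic polynomial of a matrix over a field
divides its minimal polynomial. -/
lemma aux_irreducible_dvd_minpoly {E : Type*} [Field E] {n : ℕ}
    (M : Matrix (Fin n) (Fin n) E) {p : E[X]} (hp : Irreducible p)
    (hdvd : p ∣ M.charpoly) : p ∣ minpoly E M := by
  classical
  set L := p.SplittingField
  have hdeg : p.degree ≠ 0 := fun h => hp.not_isUnit (Polynomial.isUnit_iff_degree_eq_zero.mpr h)
  obtain ⟨μ, hμ⟩ := (Polynomial.SplittingField.splits p).exists_eval_eq_zero
    (by rwa [Polynomial.degree_map])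
  rw [Polynomial.eval_map] at hμ
  set N := M.map (algebraMap E L) with hN
  have hch : N.charpoly = M.charpoly.map (algebraMap E L) := Matrix.charpoly_map M _
  have hroot : N.charpoly.IsRoot μ := by
    obtain ⟨u, hu⟩ := hdvd
    rw [hch, hu, Polynomial.map_mul]
    have : (p.map (algebraMap E L)).IsRoot μ := by
      rw [Polynomial.IsRoot, Polynomial.eval_map]; exact hμ
    simp [Polynomial.IsRoot, Polynomial.eval_mul] at this ⊢
    exact Or.inl this
  -- translate to determinant
  have hdet : (μ • (1 : Matrix (Fin n) (Fin n) L) - N).det = 0 := by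
    have h1 : Polynomial.eval μ N.charpoly = 0 := hroot
    have h2 : Polynomial.eval μ N.charpoly
        = ((Polynomial.evalRingHom μ).mapMatrix N.charmatrix).det := by
      rw [Matrix.charpoly, ← Polynomial.coe_evalRingHom, RingHom.map_det]
    have h3 : (Polynomial.evalRingHom μ).mapMatrix N.charmatrix
        = μ • (1 : Matrix (Fin n) (Fin n) L) - N := by
      ext i j
      by_cases h : i = j <;>
        simp [h, Matrix.charmatrix_apply, RingHom.mapMatrix_apply, Matrix.map_apply,
          Matrix.sub_apply, Matrix.smul_apply, Matrix.one_apply, Matrix.diagonal]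
    rw [← h3, ← h2, h1]
  obtain ⟨v, hv0, hv⟩ := Matrix.exists_mulVec_eq_zero_iff.mpr hdet
  have hNv : N.mulVec v = μ • v := by
    have h4 : μ • v - N.mulVec v = 0 := by
      rw [← hv, Matrix.sub_mulVec, Matrix.smul_mulVec, Matrix.one_mulVec]
    have := sub_eq_zero.mp h4
    exact this.symm
  have he : Module.End.HasEigenvalue (Matrix.toLin' N) μ :=
    Module.End.hasEigenvalue_of_hasEigenvector
      ⟨Module.End.mem_eigenspace_iff.mpr (by simpa [Matrix.toLin'_apply] using hNv), hv0⟩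
  have hrootm : (minpoly L N).IsRoot μ := by
    have := Module.End.hasEigenvalue_iff_isRoot.mp he
    rwa [Matrix.minpoly_toLin'] at this
  have hmapdvd : minpoly L N ∣ (minpoly E M).map (algebraMap E L) := by
    apply minpoly.dvd
    rw [Polynomial.aeval_map_algebraMap]
    have hNA : N = (Algebra.ofId E L).mapMatrix M := by
      ext i j; simp [AlgHom.mapMatrix_apply, Matrix.map_apply, Algebra.ofId_apply, hN]
    rw [hNA, Polynomial.aeval_algHom_apply, minpoly.aeval, map_zero]
  have hμm : Polynomial.aeval μ (minpoly E M) = 0 := by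
    have : ((minpoly E M).map (algebraMap E L)).IsRoot μ := hrootm.dvd hmapdvd
    rw [Polynomial.IsRoot, Polynomial.eval_map] at this
    exact this
  have hint : IsIntegral E μ :=
    IsAlgebraic.isIntegral ⟨p, hp.ne_zero, by rw [Polynomial.aeval_def]; exact hμ⟩
  have h1 : minpoly E μ ∣ p := minpoly.dvd E μ (by rw [Polynomial.aeval_def]; exact hμ)
  have h2 : minpoly E μ ∣ minpoly E M := minpoly.dvd E μ hμm
  have hassoc : Associated (minpoly E μ) p :=
    (minpoly.irreducible hint).associated_of_dvd hp h1
  exact (hassoc.symm.dvd).trans h2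

/-- `Y` is `f`-primary cyclic: the multiplicity of the (monic irreducible) polynomial `f`
in the characteristic polynomial of `Y` equals its multiplicity in the minimal
polynomial of `Y`, and this multiplicity is at least 1. -/
def IsPrimaryCyclic {E V : Type*} [Field E] [AddCommGroup V] [Module E V]
    [FiniteDimensional E V] (Y : V →ₗ[E] V) (f : Polynomial E) : Prop :=
  0 < multiplicity f (LinearMap.charpoly Y) ∧
    multiplicity f (LinearMap.charpoly Y) = multiplicity f (minpoly E Y)

theorem stmt14 (q b c r : ℕ) (hq : IsPrimePow q) (hb : 0 < b) (hc : 0 < c) (hr : c < 2 * r)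
    (F K : Type*) [Field F] [Fintype F] (hF : Fintype.card F = q)
    [Field K] [Algebra F K] [FiniteDimensional F K] (hK : Module.finrank F K = b)
    (g : Polynomial K) (hgm : g.Monic) (hgi : Irreducible g) (hgd : g.natDegree = r)
    (hgal : ∀ τ : K ≃ₐ[F] K, τ ≠ 1 → g.map (τ : K →+* K) ≠ g) :
    ∃ f : Polynomial F, f.Monic ∧ Irreducible f ∧ f.natDegree = b * r ∧
      f.map (algebraMap F K) = (∏ τ : K ≃ₐ[F] K, g.map (τ : K →+* K)) ∧
      ∀ A : Matrix (Fin c) (Fin c) K,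
        IsPrimaryCyclic ((A.mulVecLin).restrictScalars F) f ↔
          ∃! τ : K ≃ₐ[F] K, g.map (τ : K →+* K) ∣ LinearMap.charpoly A.mulVecLin := by
  classical
  haveI : Finite K := Module.finite_of_finite F
  haveI hGal : IsGalois F K := inferInstance
  have hr0 : 0 < r := by omega
  -- basic facts about Galois conjugation of polynomials
  have hcomp : ∀ σ τ : K ≃ₐ[F] K, ((σ * τ : K ≃ₐ[F] K) : K →+* K)
      = (σ : K →+* K).comp (τ : K →+* K) := fun σ τ => RingHom.ext fun x => rfl
  have hone : ((1 : K ≃ₐ[F] K) : K →+* K) = RingHom.id K := RingHom.ext fun x => rfl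
  have hmapmul : ∀ (σ τ : K ≃ₐ[F] K) (h : K[X]),
      (h.map (τ : K →+* K)).map (σ : K →+* K) = h.map ((σ * τ : K ≃ₐ[F] K) : K →+* K) := by
    intro σ τ h
    rw [Polynomial.map_map, hcomp]
  have halg : ∀ σ : K ≃ₐ[F] K, (σ : K →+* K).comp (algebraMap F K) = algebraMap F K :=
    fun σ => RingHom.ext fun x => σ.commutes x
  have hmone : ∀ h : K[X], h.map ((1 : K ≃ₐ[F] K) : K →+* K) = h := by
    intro h; rw [hone, Polynomial.map_id]
  -- the conjugates of g are pairwise distinct monic irreducibles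
  have hmonicσ : ∀ σ : K ≃ₐ[F] K, (g.map (σ : K →+* K)).Monic := fun σ => hgm.map _
  have hirrσ : ∀ σ : K ≃ₐ[F] K, Irreducible (g.map (σ : K →+* K)) := by
    intro σ
    have : g.map (σ : K →+* K) = (Polynomial.mapEquiv σ.toRingEquiv) g := rfl
    rw [this]
    exact (MulEquiv.irreducible_iff (Polynomial.mapEquiv σ.toRingEquiv).toMulEquiv).mpr hgi
  have hprimeσ : ∀ σ : K ≃ₐ[F] K, Prime (g.map (σ : K →+* K)) :=
    fun σ => (hirrσ σ).prime
  have hdegσ : ∀ σ : K ≃ₐ[F] K, (g.map (σ : K →+* K)).natDegree = r := by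
    intro σ; rw [hgm.natDegree_map, hgd]
  have hdistinct : ∀ σ τ : K ≃ₐ[F] K, σ ≠ τ → g.map (σ : K →+* K) ≠ g.map (τ : K →+* K) := by
    intro σ τ hne heq
    apply hgal (τ⁻¹ * σ) (by
      intro h
      exact hne (by rwa [inv_mul_eq_one, eq_comm] at h))
    have := congrArg (fun h => Polynomial.map ((τ⁻¹ : K ≃ₐ[F] K) : K →+* K) h) heq
    rw [hmapmul, hmapmul, inv_mul_cancel, hmone] at this
    exact this
  have hnotdvd : ∀ σ τ : K ≃ₐ[F] K, σ ≠ τ →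
      ¬ g.map (σ : K →+* K) ∣ g.map (τ : K →+* K) := by
    intro σ τ hne hdvd
    exact hdistinct σ τ hne (Polynomial.eq_of_monic_of_associated (hmonicσ σ) (hmonicσ τ)
      ((hirrσ σ).associated_of_dvd (hirrσ τ) hdvd))
  have hcopr : ∀ σ τ : K ≃ₐ[F] K, σ ≠ τ →
      IsCoprime (g.map (σ : K →+* K)) (g.map (τ : K →+* K)) := by
    intro σ τ hne
    exact (EuclideanDomain.dvd_or_coprime _ _ (hirrσ σ)).resolve_left (hnotdvd σ τ hne)
  -- Galois-fixed polynomials descend to F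
  have hbot : IntermediateField.fixedField (⊤ : Subgroup (K ≃ₐ[F] K))
      = (⊥ : IntermediateField F K) :=
    OrderIso.map_bot (@IsGalois.intermediateFieldEquivSubgroup F _ K _ _ _ _).symm
  have hdescend : ∀ P : K[X], P.Monic → (∀ τ : K ≃ₐ[F] K, P.map (τ : K →+* K) = P) →
      ∃ p : F[X], p.map (algebraMap F K) = P ∧ p.Monic := by
    intro P hPm hPfix
    have hmem : P ∈ Polynomial.lifts (algebraMap F K) := by
      rw [Polynomial.lifts_iff_coeff_lifts]
      intro n
      have hfix : ∀ τ : K ≃ₐ[F] K, τ (P.coeff n) = P.coeff n := by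
        intro τ
        conv_rhs => rw [← hPfix τ]
        rw [Polynomial.coeff_map]
        rfl
      rw [← IntermediateField.mem_bot (F := F), ← hbot]
      intro τ
      first
        | exact hfix τ
        | exact hfix τ.1
        | simpa using hfix τ.1
        | (show (τ.1 : K ≃ₐ[F] K) (P.coeff n) = P.coeff n; exact hfix τ.1)
    obtain ⟨p, hp1, _, hp3⟩ := Polynomial.lifts_and_degree_eq_and_monic hmem hPm
    exact ⟨p, hp1, hp3⟩
  -- the norm of g
  set P : K[X] := ∏ τ : K ≃ₐ[F] K, g.map (τ : K →+* K) with hP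
  have hPmonic : P.Monic := Polynomial.monic_prod_of_monic _ _ fun σ _ => hmonicσ σ
  have hPfix : ∀ τ : K ≃ₐ[F] K, P.map (τ : K →+* K) = P := by
    intro τ
    rw [hP, ← Polynomial.coe_mapRingHom, map_prod]
    simp only [Polynomial.coe_mapRingHom]
    calc (∏ σ : K ≃ₐ[F] K, (g.map (σ : K →+* K)).map (τ : K →+* K))
        = ∏ σ : K ≃ₐ[F] K, g.map ((τ * σ : K ≃ₐ[F] K) : K →+* K) := by
          refine Finset.prod_congr rfl fun σ _ => ?_
          rw [hmapmul]
      _ = ∏ σ : K ≃ₐ[F] K, g.map (σ : K →+* K) :=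
          Fintype.prod_equiv (Equiv.mulLeft τ) _ _ fun σ => rfl
  obtain ⟨f, hfmap, hfmonic⟩ := hdescend P hPmonic hPfix
  have hcard : Fintype.card (K ≃ₐ[F] K) = b := by
    rw [← Nat.card_eq_fintype_card, IsGalois.card_aut_eq_finrank F K, hK]
  have hPdeg : P.natDegree = b * r := by
    rw [hP, Polynomial.natDegree_prod _ _ fun σ _ => (hmonicσ σ).ne_zero]
    simp only [hdegσ]
    rw [Finset.sum_const, Finset.card_univ, hcard, smul_eq_mul]
  have hinj : Function.Injective (algebraMap F K) := (algebraMap F K).injective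
  have hfdeg : f.natDegree = b * r := by
    rw [← hPdeg, ← hfmap, hfmonic.natDegree_map]
  have hbr0 : 0 < b * r := Nat.mul_pos hb hr0
  have hf0 : f ≠ 0 := hfmonic.ne_zero
  -- each conjugate divides P, and P divides anything divisible by all conjugates
  have hginP : ∀ σ : K ≃ₐ[F] K, g.map (σ : K →+* K) ∣ P :=
    fun σ => Finset.dvd_prod_of_mem _ (Finset.mem_univ σ)
  have hPdvd : ∀ u : K[X], (∀ σ : K ≃ₐ[F] K, g.map (σ : K →+* K) ∣ u) → P ∣ u := by
    intro u hu
    refine Finset.prod_dvd_of_coprime ?_ fun σ _ => hu σ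
    intro σ _ τ _ hne
    exact hcopr σ τ hne
  have hgP : g ∣ P := by
    have := hginP 1
    rwa [hmone] at this
  -- irreducibility of f
  have hfirr : Irreducible f := by
    constructor
    · intro hu
      have := Polynomial.natDegree_eq_zero_of_isUnit hu
      omega
    · intro u v huv
      have hu0 : u ≠ 0 := fun h => hf0 (by rw [huv, h, zero_mul])
      have hv0 : v ≠ 0 := fun h => hf0 (by rw [huv, h, mul_zero])
      have key : ∀ w z : F[X], f = w * z → g ∣ w.map (algebraMap F K) → w ≠ 0 → z ≠ 0 →
          IsUnit z := by
        intro w z hwz hgw hw0 hz0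
        have hallσ : ∀ σ : K ≃ₐ[F] K, g.map (σ : K →+* K) ∣ w.map (algebraMap F K) := by
          intro σ
          have := Polynomial.map_dvd (σ : K →+* K) hgw
          rwa [Polynomial.map_map, halg] at this
        have hPw : P ∣ w.map (algebraMap F K) := hPdvd _ hallσ
        have hwm0 : w.map (algebraMap F K) ≠ 0 := by
          rwa [Ne, Polynomial.map_eq_zero_iff hinj]
        have hdegge : b * r ≤ w.natDegree := by
          have h1 := Polynomial.natDegree_le_of_dvd hPw hwm0
          rwa [hPdeg, Polynomial.natDegree_map_eq_of_injective hinj] at h1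
        have hsum : w.natDegree + z.natDegree = b * r := by
          have h5 := hfdeg
          rw [hwz, Polynomial.natDegree_mul hw0 hz0] at h5
          exact h5
        have hz : z.natDegree = 0 := by omega
        obtain ⟨a, ha⟩ := Polynomial.natDegree_eq_zero.mp hz
        have ha0 : a ≠ 0 := fun h => hz0 (by rw [← ha, h, map_zero])
        rw [← ha]
        exact Polynomial.isUnit_C.mpr (isUnit_iff_ne_zero.mpr ha0)
      have hgf : g ∣ u.map (algebraMap F K) * v.map (algebraMap F K) := by
        rw [← Polynomial.map_mul, ← huv, hfmap]
        exact hgP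
      rcases hgi.prime.dvd_mul.mp hgf with h | h
      · exact Or.inr (key u v huv h hu0 hv0)
      · exact Or.inl (key v u (by rw [huv, mul_comm]) h hv0 hu0)
  refine ⟨f, hfmonic, hfirr, hfdeg, hfmap, ?_⟩
  -- the criterion for each matrix A
  intro A
  set φ := A.mulVecLin with hφ
  have hbasis : LinearMap.charpoly φ = A.charpoly := by
    rw [hφ, ← Matrix.toLin'_apply',
      ← LinearMap.charpoly_toMatrix (Matrix.toLin' A) (Pi.basisFun K (Fin c)),
      LinearMap.toMatrix_eq_toMatrix', LinearMap.toMatrix'_toLin']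
  have hminφ : minpoly K φ = minpoly K A := by
    rw [hφ, ← Matrix.toLin'_apply', Matrix.minpoly_toLin']
  set χ := LinearMap.charpoly φ with hχ
  have hχmonic : χ.Monic := LinearMap.charpoly_monic φ
  have hχ0 : χ ≠ 0 := hχmonic.ne_zero
  have hχdeg : χ.natDegree = c := by
    rw [hχ, LinearMap.charpoly_natDegree, Module.finrank_fin_fun]
  -- at most one conjugate of g divides χ
  have huniq : ∀ σ τ : K ≃ₐ[F] K, g.map (σ : K →+* K) ∣ χ → g.map (τ : K →+* K) ∣ χ →
      σ = τ := by
    intro σ τ hσ hτ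
    by_contra hne
    have hmul := (hcopr σ τ hne).mul_dvd hσ hτ
    have := Polynomial.natDegree_le_of_dvd hmul hχ0
    rw [Polynomial.natDegree_mul (hmonicσ σ).ne_zero (hmonicσ τ).ne_zero, hdegσ, hdegσ,
      hχdeg] at this
    omega
  -- restriction of scalars as an F-algebra homomorphism
  set ψ := LinearMap.restrictScalars F φ with hψ
  let ρ : Module.End K (Fin c → K) →ₐ[F] Module.End F (Fin c → K) :=
    { toFun := LinearMap.restrictScalars F
      map_one' := rfl
      map_mul' := fun _ _ => rfl
      map_zero' := rfl
      map_add' := fun _ _ => rfl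
      commutes' := fun a => rfl }
  have hρinj : Function.Injective ρ := LinearMap.restrictScalars_injective F
  have hmselfeq : minpoly F ψ = minpoly F φ := minpoly.algHom_eq ρ hρinj φ
  set mK := minpoly K φ with hmK
  set mF := minpoly F ψ with hmF
  have hφint : IsIntegral K φ := LinearMap.isIntegral φ
  have hmKmonic : mK.Monic := minpoly.monic hφint
  have hmKdvdχ : mK ∣ χ := LinearMap.minpoly_dvd_charpoly φ
  have h1 : mK ∣ mF.map (algebraMap F K) := by
    have h := minpoly.dvd_map_of_isScalarTower F K φ
    rw [← hmselfeq] at h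
    exact h
  -- mF.map divides the product of the conjugates of mK
  set Q : K[X] := ∏ τ : K ≃ₐ[F] K, mK.map (τ : K →+* K) with hQ
  have hQmonic : Q.Monic := Polynomial.monic_prod_of_monic _ _ fun σ _ => hmKmonic.map _
  have hQfix : ∀ τ : K ≃ₐ[F] K, Q.map (τ : K →+* K) = Q := by
    intro τ
    rw [hQ, ← Polynomial.coe_mapRingHom, map_prod]
    simp only [Polynomial.coe_mapRingHom]
    calc (∏ σ : K ≃ₐ[F] K, (mK.map (σ : K →+* K)).map (τ : K →+* K))
        = ∏ σ : K ≃ₐ[F] K, mK.map ((τ * σ : K ≃ₐ[F] K) : K →+* K) := by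
          refine Finset.prod_congr rfl fun σ _ => ?_
          rw [hmapmul]
      _ = ∏ σ : K ≃ₐ[F] K, mK.map (σ : K →+* K) :=
          Fintype.prod_equiv (Equiv.mulLeft τ) _ _ fun σ => rfl
  obtain ⟨qF, hqF, hqFm⟩ := hdescend Q hQmonic hQfix
  have hmKQ : mK ∣ Q := by
    have h := Finset.dvd_prod_of_mem (fun τ : K ≃ₐ[F] K => mK.map (τ : K →+* K))
      (Finset.mem_univ 1)
    rwa [hmone] at h
  have haqF : Polynomial.aeval φ qF = 0 := by
    have : Polynomial.aeval φ (qF.map (algebraMap F K)) = 0 := by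
      rw [hqF]
      obtain ⟨d, hd⟩ := hmKQ
      rw [hd, _root_.map_mul]
      have hz : Polynomial.aeval φ mK = 0 := minpoly.aeval K φ
      rw [hz, zero_mul]
    rwa [Polynomial.aeval_map_algebraMap] at this
  have h2 : mF.map (algebraMap F K) ∣ Q := by
    rw [← hqF]
    apply Polynomial.map_dvd
    have h := minpoly.dvd F φ haqF
    rw [← hmselfeq] at h
    exact h
  -- Claim A : f ∣ mF ↔ some conjugate of g divides χ
  have claimA : f ∣ mF ↔ ∃ σ : K ≃ₐ[F] K, g.map (σ : K →+* K) ∣ χ := by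
    constructor
    · intro hfm
      have hfQ : f.map (algebraMap F K) ∣ Q :=
        dvd_trans (Polynomial.map_dvd _ hfm) h2
      have hgQ : g ∣ Q := dvd_trans hgP (by rw [← hfmap]; exact hfQ)
      obtain ⟨σ, _, hσ⟩ := hgi.prime.exists_mem_finset_dvd hgQ
      refine ⟨σ⁻¹, ?_⟩
      have := Polynomial.map_dvd ((σ⁻¹ : K ≃ₐ[F] K) : K →+* K) hσ
      rw [hmapmul, inv_mul_cancel, hmone] at this
      exact dvd_trans this hmKdvdχ
    · rintro ⟨σ, hσ⟩
      have hσA : g.map (σ : K →+* K) ∣ A.charpoly := by rwa [← hbasis]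
      have hgmin : g.map (σ : K →+* K) ∣ minpoly K A :=
        aux_irreducible_dvd_minpoly A (hirrσ σ) hσA
      have hgmK : g.map (σ : K →+* K) ∣ mK := by rw [← hminφ] at hgmin; exact hgmin
      have hgmF : g.map (σ : K →+* K) ∣ mF.map (algebraMap F K) := dvd_trans hgmK h1
      have hall : ∀ τ : K ≃ₐ[F] K, g.map (τ : K →+* K) ∣ mF.map (algebraMap F K) := by
        intro τ
        have := Polynomial.map_dvd ((τ * σ⁻¹ : K ≃ₐ[F] K) : K →+* K) hgmF
        rw [hmapmul, Polynomial.map_map, halg] at this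
        rw [mul_assoc, inv_mul_cancel, mul_one] at this
        exact this
      have hPmF : P ∣ mF.map (algebraMap F K) := hPdvd _ hall
      rw [← hfmap] at hPmF
      exact (Polynomial.map_dvd_map _ hinj hfmonic).mp hPmF
  -- Claim B : IsPrimaryCyclic ψ f ↔ f ∣ mF
  have hχF : LinearMap.charpoly ψ = LinearMap.charpoly ((A.mulVecLin).restrictScalars F) := rfl
  set χF := LinearMap.charpoly ψ with hχFdef
  have hχFmonic : χF.Monic := LinearMap.charpoly_monic ψ
  have hχF0 : χF ≠ 0 := hχFmonic.ne_zero
  have hχFdeg : χF.natDegree = b * c := by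
    rw [hχFdef, LinearMap.charpoly_natDegree]
    rw [← Module.finrank_mul_finrank F K (Fin c → K), hK, Module.finrank_fin_fun]
  have hmFdvdχF : mF ∣ χF := LinearMap.minpoly_dvd_charpoly ψ
  have hf2 : ¬ f ^ 2 ∣ χF := by
    intro h
    have := Polynomial.natDegree_le_of_dvd h hχF0
    rw [Polynomial.natDegree_pow, hfdeg, hχFdeg] at this
    have : 2 * (b * r) ≤ b * c := this
    have hbc : b * c < 2 * (b * r) := by
      calc b * c < b * (2 * r) := (Nat.mul_lt_mul_left hb).mpr hr
        _ = 2 * (b * r) := by ring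
    omega
  have claimB : IsPrimaryCyclic ψ f ↔ f ∣ mF := by
    constructor
    · rintro ⟨hpos, heq⟩
      have hpos' : 0 < multiplicity f mF := heq ▸ hpos
      exact dvd_trans (dvd_pow_self f hpos'.ne') (pow_multiplicity_dvd f mF)
    · intro hfm
      have hfχF : f ∣ χF := dvd_trans hfm hmFdvdχF
      have hm1 : multiplicity f χF = 1 :=
        multiplicity_eq_of_dvd_of_not_dvd (by rwa [pow_one]) (by rwa [one_add_one_eq_two])
      have hf2m : ¬ f ^ 2 ∣ mF := fun h => hf2 (dvd_trans h hmFdvdχF)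
      have hm2 : multiplicity f mF = 1 :=
        multiplicity_eq_of_dvd_of_not_dvd (by rwa [pow_one]) (by rwa [one_add_one_eq_two])
      exact ⟨by rw [hm1]; norm_num, by rw [hm1, hm2]⟩
  -- Claim C : existence is equivalent to unique existence
  have claimC : (∃ σ : K ≃ₐ[F] K, g.map (σ : K →+* K) ∣ χ) ↔
      (∃! σ : K ≃ₐ[F] K, g.map (σ : K →+* K) ∣ χ) := by
    constructor
    · rintro ⟨σ, hσ⟩
      exact ⟨σ, hσ, fun τ hτ => huniq τ σ hτ hσ⟩
    · rintro ⟨σ, hσ, _⟩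
      exact ⟨σ, hσ⟩
  rw [claimB, claimA, claimC]
end
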